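/- Let σ > 0, a > 0 and z ∈ ℝ, and let X be a real random variable with the Gaussian distribution N(0, σ²). Then E[ max(0, min(X + zσ, aσ)) ] = σ · [ (φ(z) − φ(a−z)) + z(Φ(a−z) − Φ(−z)) + a(1 − Φ(a−z)) ]. -/

import Mathlib

open MeasureTheory ProbabilityTheory Real Set
open scoped ENNReal NNReal


/-- The standard normal density `φ`. -/
noncomputable def stdNormalPDF (t : ℝ) : ℝ :=
  (Real.sqrt (2 * Real.pi))⁻¹ * Real.exp (-t^2/2)

/-- The standard normal cumulative distribution function `Φ`. -/
noncomputable def stdNormalCDF (x : ℝ) : ℝ :=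
  ∫ t in Set.Iic x, stdNormalPDF t


lemma stdNormalPDF_eq (t : ℝ) : stdNormalPDF t = (Real.sqrt (2 * Real.pi))⁻¹ * Real.exp (-(1/2) * t^2) := by
  rw [stdNormalPDF]; ring_nf

lemma stdNormalPDF_nonneg (t : ℝ) : 0 ≤ stdNormalPDF t := by
  rw [stdNormalPDF]; positivity

lemma continuous_stdNormalPDF : Continuous stdNormalPDF := by
  unfold stdNormalPDF
  continuity

lemma integrable_stdNormalPDF : Integrable stdNormalPDF := by
  simp_rw [funext stdNormalPDF_eq]
  exact (integrable_exp_neg_mul_sq (by norm_num)).const_mul _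

lemma integral_stdNormalPDF : ∫ t, stdNormalPDF t = 1 := by
  simp_rw [funext stdNormalPDF_eq]
  rw [integral_const_mul, integral_gaussian]
  rw [show (π / (1/2)) = 2 * π by ring]
  rw [inv_mul_cancel₀ (by positivity : Real.sqrt (2*π) ≠ 0)]

lemma stdNormalPDF_neg (t : ℝ) : stdNormalPDF (-t) = stdNormalPDF t := by
  simp [stdNormalPDF, neg_pow]

lemma hasDerivAt_neg_stdNormalPDF (t : ℝ) :
    HasDerivAt (fun s => -stdNormalPDF s) (t * stdNormalPDF t) t := by
  have h : HasDerivAt (fun s : ℝ => -s^2/2) (-t) t := by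
    have := ((hasDerivAt_pow 2 t).neg).div_const 2
    simpa using this.congr_deriv (by push_cast; ring)
  have := ((h.exp).const_mul ((Real.sqrt (2 * Real.pi))⁻¹)).fun_neg
  unfold stdNormalPDF
  refine this.congr_deriv ?_
  ring

lemma stdNormal_core (a z : ℝ) (ha : 0 < a) :
    ∫ t, stdNormalPDF t * max 0 (min (t + z) a)
      = (stdNormalPDF z - stdNormalPDF (a - z))
        + z * (stdNormalCDF (a - z) - stdNormalCDF (-z))
        + a * (1 - stdNormalCDF (a - z)) := by
  set M : ℝ → ℝ := fun t => max 0 (min (t + z) a) with hMdef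
  have hMc : Continuous M :=
    continuous_const.max ((continuous_id.add continuous_const).min continuous_const)
  have hMbd : ∀ t, ‖M t‖ ≤ a := by
    intro t
    rw [Real.norm_eq_abs, abs_of_nonneg (le_max_left _ _)]
    exact max_le ha.le (min_le_right _ _)
  have hInt : Integrable (fun t => stdNormalPDF t * M t) := by
    have h : (fun t => stdNormalPDF t * M t) = fun t => M t * stdNormalPDF t := by
      funext t; ring
    rw [h]
    exact integrable_stdNormalPDF.bdd_mul hMc.aestronglyMeasurable (c := a) (Filter.Eventually.of_forall hMbd)
  have hle : -z ≤ a - z := by linarith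
  -- the part on Iic (-z) vanishes
  have hzero : ∫ t in Iic (-z), stdNormalPDF t * M t = 0 := by
    apply setIntegral_eq_zero_of_forall_eq_zero
    intro t ht
    have ht' : t ≤ -z := ht
    have h2 : M t = 0 := by
      rw [hMdef]; dsimp only
      rw [min_eq_left (by linarith), max_eq_left (by linarith)]
    rw [h2, mul_zero]
  have hIic : ∫ t in Iic (a - z), stdNormalPDF t * M t
      = ∫ t in (-z)..(a - z), stdNormalPDF t * M t := by
    have h := intervalIntegral.integral_Iic_sub_Iic (a := -z) (b := a - z)
      (hInt.integrableOn) (hInt.integrableOn)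
    rw [hzero, sub_zero] at h
    exact h
  -- on the interval, M t = t + z
  have hmid : ∫ t in (-z)..(a - z), stdNormalPDF t * M t
      = ∫ t in (-z)..(a - z), (t * stdNormalPDF t + z * stdNormalPDF t) := by
    apply intervalIntegral.integral_congr
    intro t ht
    rw [uIcc_of_le hle] at ht
    obtain ⟨ht1, ht2⟩ := ht
    rw [hMdef]; dsimp only
    rw [min_eq_left (by linarith), max_eq_right (by linarith)]
    ring
  have e1 : ∫ t in (-z)..(a - z), t * stdNormalPDF t
      = stdNormalPDF z - stdNormalPDF (a - z) := by
    rw [intervalIntegral.integral_eq_sub_of_hasDerivAt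
      (fun t _ => hasDerivAt_neg_stdNormalPDF t)
      ((continuous_id.mul continuous_stdNormalPDF).intervalIntegrable _ _)]
    rw [← stdNormalPDF_neg z]
    ring
  have e2 : ∫ t in (-z)..(a - z), stdNormalPDF t
      = stdNormalCDF (a - z) - stdNormalCDF (-z) := by
    rw [← intervalIntegral.integral_Iic_sub_Iic integrable_stdNormalPDF.integrableOn
      integrable_stdNormalPDF.integrableOn]
    rfl
  have hIoi : ∫ t in Ioi (a - z), stdNormalPDF t * M t
      = a * (1 - stdNormalCDF (a - z)) := by
    have hcong : ∫ t in Ioi (a - z), stdNormalPDF t * M t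
        = ∫ t in Ioi (a - z), stdNormalPDF t * a := by
      apply setIntegral_congr_fun measurableSet_Ioi
      intro t ht
      have ht' : a - z < t := ht
      rw [hMdef]; dsimp only
      rw [min_eq_right (by linarith), max_eq_right ha.le]
    have htail : ∫ t in Ioi (a - z), stdNormalPDF t = 1 - stdNormalCDF (a - z) := by
      have h := intervalIntegral.integral_Iic_add_Ioi (b := a - z)
        integrable_stdNormalPDF.integrableOn integrable_stdNormalPDF.integrableOn
      rw [integral_stdNormalPDF] at h
      have : stdNormalCDF (a - z) + ∫ t in Ioi (a - z), stdNormalPDF t = 1 := h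
      linarith
    rw [hcong, integral_mul_const, htail]
    ring
  have hi1 : IntervalIntegrable (fun t : ℝ => t * stdNormalPDF t) volume (-z) (a - z) :=
    (continuous_id.mul continuous_stdNormalPDF).intervalIntegrable _ _
  have hi2 : IntervalIntegrable (fun t : ℝ => z * stdNormalPDF t) volume (-z) (a - z) :=
    (continuous_const.mul continuous_stdNormalPDF).intervalIntegrable _ _
  rw [← intervalIntegral.integral_Iic_add_Ioi hInt.integrableOn hInt.integrableOn, hIic, hmid,
    intervalIntegral.integral_add hi1 hi2,
    intervalIntegral.integral_const_mul, e1, e2, hIoi]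

/-- The key expected-length computation in the proof of Theorem 1 of Cai, Low and Xia (2013):
if `X ~ N(0, σ²)`, then
`E[max(0, min(X + zσ, aσ))] = σ[(φ(z) − φ(a−z)) + z(Φ(a−z) − Φ(−z)) + a(1 − Φ(a−z))]`. -/
theorem expected_length_truncated_interval
    {Ω : Type*} [MeasurableSpace Ω] (P : Measure Ω) [IsProbabilityMeasure P]
    (σ a z : ℝ) (hσ : 0 < σ) (ha : 0 < a)
    (X : Ω → ℝ) (hX : P.map X = gaussianReal 0 (Real.toNNReal (σ^2))) :
    ∫ ω, max 0 (min (X ω + z * σ) (a * σ)) ∂P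
      = σ * ((stdNormalPDF z - stdNormalPDF (a - z))
          + z * (stdNormalCDF (a - z) - stdNormalCDF (-z))
          + a * (1 - stdNormalCDF (a - z))) := by
  set v : NNReal := Real.toNNReal (σ^2) with hvdef
  have hσs : ((v : NNReal) : ℝ) = σ^2 := Real.coe_toNNReal _ (sq_nonneg σ)
  have hv : v ≠ 0 := by
    intro h
    have : ((v : NNReal) : ℝ) = 0 := by rw [h]; simp
    rw [hσs] at this
    nlinarith
  have hXm : AEMeasurable X P := by
    by_contra h
    rw [Measure.map_of_not_aemeasurable h] at hX
    have h1 : (gaussianReal 0 v) univ = 1 := measure_univ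
    rw [← hX] at h1
    simp at h1
  set g : ℝ → ℝ := fun x => max 0 (min (x + z * σ) (a * σ)) with hgdef
  have hgc : Continuous g :=
    continuous_const.max ((continuous_id.add continuous_const).min continuous_const)
  have step1 : ∫ ω, max 0 (min (X ω + z * σ) (a * σ)) ∂P = ∫ x, g x ∂(gaussianReal 0 v) := by
    rw [← hX, integral_map hXm hgc.aestronglyMeasurable]
  have step2 : ∫ x, g x ∂(gaussianReal 0 v) = ∫ x, gaussianPDFReal 0 v x * g x := by
    rw [gaussianReal_of_var_ne_zero _ hv]
    have h := integral_withDensity_eq_integral_smul (μ := volume)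
      (measurable_gaussianPDFReal 0 v).real_toNNReal g
    have heq : volume.withDensity (gaussianPDF 0 v)
        = volume.withDensity (fun x => ((gaussianPDFReal 0 v x).toNNReal : ℝ≥0∞)) := rfl
    rw [heq, h]
    congr 1
    funext x
    rw [NNReal.smul_def, Real.coe_toNNReal _ (gaussianPDFReal_nonneg _ _ _), smul_eq_mul]
  set G : ℝ → ℝ := fun x => gaussianPDFReal 0 v x * g x with hGdef
  have hpt : ∀ t, G (σ * t) = σ⁻¹ * σ * (stdNormalPDF t * max 0 (min (t + z) a)) := by
    intro t
    have h1 : gaussianPDFReal 0 v (σ * t) = σ⁻¹ * stdNormalPDF t := by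
      rw [gaussianPDFReal, stdNormalPDF, hσs]
      rw [show 2 * π * σ^2 = (2 * π) * σ^2 by ring, Real.sqrt_mul (by positivity),
        Real.sqrt_sq hσ.le, mul_inv]
      have h2 : -(σ * t - 0)^2 / (2 * σ^2) = -t^2 / 2 := by
        field_simp
        ring
      rw [h2]
      ring
    have h3 : g (σ * t) = σ * max 0 (min (t + z) a) := by
      rw [hgdef]
      dsimp only
      rw [mul_max_of_nonneg _ _ hσ.le, mul_zero, mul_min_of_nonneg _ _ hσ.le]
      congr 1
      congr 1 <;> ring
    rw [hGdef]
    dsimp only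
    rw [h1, h3]
    ring
  have hcv := MeasureTheory.Measure.integral_comp_mul_left G σ
  rw [abs_of_pos (inv_pos.mpr hσ), smul_eq_mul] at hcv
  have step3 : ∫ x, G x = σ * ∫ t, G (σ * t) := by
    rw [hcv]
    field_simp
  have step4 : ∫ t, G (σ * t) = ∫ t, stdNormalPDF t * max 0 (min (t + z) a) := by
    congr 1
    funext t
    rw [hpt t, inv_mul_cancel₀ hσ.ne', one_mul]
  rw [step1, step2, show MeasureTheory.integral volume G = ∫ x, G x from rfl,
    step3, step4, stdNormal_core a z ha]
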